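/- There exists a constant C > 0 such that for every δ > 0, every ε > 0 and every t ∈ [0, δ/2], one has 0 ≤ 1 − ∫_{B_δ} U_{ε,te₁}(y)⁴ dy ≤ C·ε⁴/δ⁴. -/

import Mathlib

noncomputable section

open MeasureTheory Real RealInnerProductSpace

/-- Euclidean four-space. -/
abbrev E4 : Type := EuclideanSpace ℝ (Fin 4)

/-- The normalizing constant `c₄ = (6/π²)^(1/4)`. -/
def c4 : ℝ := (6 / Real.pi ^ 2) ^ ((1 : ℝ) / 4)

/-- The Sobolev constant `S₄ = 8/c₄²`. -/
def S4 : ℝ := 8 / c4 ^ 2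

/-- The standard (normalized) bubble `U(x) = c₄ (1+|x|²)⁻¹`. -/
def Ubub (x : E4) : ℝ := c4 * (1 + ‖x‖ ^ 2)⁻¹

/-- The rescaled/translated bubble `U_{ε,x₀}(x) = ε⁻¹ U((x - x₀)/ε)`. -/
def Ueps (ε : ℝ) (x₀ : E4) (x : E4) : ℝ := ε⁻¹ * Ubub (ε⁻¹ • (x - x₀))

/-- The double bubble `Û_{ε,x₀} = U_{ε,x₀} + U_{ε,-x₀}`. -/
def Uhat (ε : ℝ) (x₀ : E4) (x : E4) : ℝ := Ueps ε x₀ x + Ueps ε (-x₀) x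

/-- The first standard basis vector of `ℝ⁴`. -/
def e1 : E4 := EuclideanSpace.single (0 : Fin 4) (1 : ℝ)

/-- The Yamabe (Sobolev) quotient `Q(u) = 6 ∫ |∇u|² / (∫ u⁴)^{1/2}` on `ℝ⁴`. -/
def Qyam (u : E4 → ℝ) : ℝ :=
  6 * (∫ x : E4, ‖gradient u x‖ ^ 2) / Real.sqrt (∫ x : E4, (u x) ^ 4)

open Set

lemma oneD (R : ℝ) (hR : 0 ≤ R) :
    IntegrableOn (fun r : ℝ => r ^ 3 * ((1 + r ^ 2) ^ 4)⁻¹) (Ioi R) volume ∧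
    ∫ r in Ioi R, r ^ 3 * ((1 + r ^ 2) ^ 4)⁻¹ =
      (1/4) * ((1 + R ^ 2) ^ 2)⁻¹ - (1/6) * ((1 + R ^ 2) ^ 3)⁻¹ := by
  set G : ℝ → ℝ := fun r => -(1/4) * ((1 + r ^ 2) ^ 2)⁻¹ + (1/6) * ((1 + r ^ 2) ^ 3)⁻¹ with hG
  have hu : ∀ r : ℝ, (0:ℝ) < 1 + r ^ 2 := fun r => by positivity
  have hderiv : ∀ r : ℝ, HasDerivAt G (r ^ 3 * ((1 + r ^ 2) ^ 4)⁻¹) r := by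
    intro r
    have h1 : HasDerivAt (fun r : ℝ => 1 + r ^ 2) (2 * r) r := by
      simpa using (hasDerivAt_pow 2 r).const_add 1
    have h2 : HasDerivAt (fun r : ℝ => ((1 + r ^ 2) ^ 2)⁻¹)
        (-((2 : ℕ) * (1 + r ^ 2) ^ 1 * (2 * r)) / ((1 + r ^ 2) ^ 2) ^ 2) r :=
      ((h1.pow 2).inv (pow_ne_zero _ (hu r).ne'))
    have h3 : HasDerivAt (fun r : ℝ => ((1 + r ^ 2) ^ 3)⁻¹)
        (-((3 : ℕ) * (1 + r ^ 2) ^ 2 * (2 * r)) / ((1 + r ^ 2) ^ 3) ^ 2) r :=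
      ((h1.pow 3).inv (pow_ne_zero _ (hu r).ne'))
    have := (h2.const_mul (-(1/4) : ℝ)).add (h3.const_mul ((1/6) : ℝ))
    refine this.congr_deriv ?_
    have h := (hu r).ne'
    field_simp
    ring
  have hpos : ∀ r ∈ Ioi R, 0 ≤ r ^ 3 * ((1 + r ^ 2) ^ 4)⁻¹ := by
    intro r hr
    have : 0 < r := lt_of_le_of_lt hR hr
    positivity
  have htend : Filter.Tendsto G Filter.atTop (nhds 0) := by
    have hb : Filter.Tendsto (fun r : ℝ => 1 + r ^ 2) Filter.atTop Filter.atTop :=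
      Filter.tendsto_atTop_add_const_left _ 1 (Filter.tendsto_pow_atTop two_ne_zero)
    have h2 : Filter.Tendsto (fun r : ℝ => ((1 + r ^ 2) ^ 2)⁻¹) Filter.atTop (nhds 0) :=
      (((Filter.tendsto_pow_atTop (two_ne_zero)).comp hb).inv_tendsto_atTop)
    have h3 : Filter.Tendsto (fun r : ℝ => ((1 + r ^ 2) ^ 3)⁻¹) Filter.atTop (nhds 0) :=
      (((Filter.tendsto_pow_atTop (three_ne_zero)).comp hb).inv_tendsto_atTop)
    have := (h2.const_mul (-(1/4) : ℝ)).add (h3.const_mul ((1/6) : ℝ))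
    simpa only [mul_zero, add_zero] using this
  have hder' : ∀ r ∈ Ici R, HasDerivAt G (r ^ 3 * ((1 + r ^ 2) ^ 4)⁻¹) r := fun r _ => hderiv r
  refine ⟨integrableOn_Ioi_deriv_of_nonneg' hder' hpos htend, ?_⟩
  rw [integral_Ioi_of_hasDerivAt_of_nonneg' hder' hpos htend]
  simp [hG]; ring

lemma radial (f : ℝ → ℝ) :
    ∫ x : E4, f ‖x‖ = 2 * π ^ 2 * ∫ r in Ioi (0:ℝ), r ^ 3 * f r := by
  have hd : Module.finrank ℝ E4 = 4 := finrank_euclideanSpace_fin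
  have hvol : (volume (Metric.ball (0 : E4) 1)).toReal = π ^ 2 / 2 := by
    rw [EuclideanSpace.volume_ball]
    have hc : Fintype.card (Fin 4) = 4 := by simp
    simp only [hc, Nat.cast_ofNat]
    have h1 : Real.sqrt π ^ 4 = π ^ 2 := by
      rw [show (4:ℕ) = 2 * 2 from rfl, pow_mul, Real.sq_sqrt pi_pos.le]
    have h2 : Real.Gamma ((4:ℝ) / 2 + 1) = 2 := by
      rw [show ((4:ℝ)/2 + 1) = ((2:ℕ) + 1 : ℝ) by norm_num, Real.Gamma_nat_eq_factorial]
      norm_num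
    rw [h1, h2, ENNReal.ofReal_one, one_pow, one_mul, ENNReal.toReal_ofReal (by positivity)]
  have h := MeasureTheory.integral_fun_norm_addHaar (volume : Measure E4) f
  rw [h, hd, Measure.real, hvol]
  have h3 : ∫ r in Ioi (0:ℝ), r ^ (4-1) • f r = ∫ r in Ioi (0:ℝ), r ^ 3 * f r := by
    norm_num [smul_eq_mul]
  rw [nsmul_eq_mul, smul_eq_mul, h3]
  ring

lemma c4_pos : 0 < c4 := Real.rpow_pos_of_pos (by positivity) _

lemma c4_pow_four : c4 ^ 4 = 6 / π ^ 2 := by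
  rw [c4, ← Real.rpow_natCast ((6 / π ^ 2) ^ ((1:ℝ)/4)) 4, ← Real.rpow_mul (by positivity)]
  norm_num

lemma Ubub_pow (x : E4) : Ubub x ^ 4 = c4 ^ 4 * ((1 + ‖x‖ ^ 2) ^ 4)⁻¹ := by
  rw [Ubub, mul_pow, inv_pow]

lemma Ubub_cont : Continuous fun x : E4 => Ubub x ^ 4 := by
  apply Continuous.pow
  apply continuous_const.mul
  exact ((continuous_const.add ((continuous_norm).pow 2)).inv₀ (fun x => (by positivity : (0:ℝ) < 1 + ‖x‖ ^ 2).ne'))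

lemma Ubub_integrable : Integrable (fun x : E4 => Ubub x ^ 4) := by
  have hint : Integrable (fun x : E4 => c4 ^ 4 * (2 ^ (4:ℝ) * (1 + ‖x‖) ^ (-(8:ℝ)))) := by
    apply Integrable.const_mul
    apply Integrable.const_mul
    apply integrable_one_add_norm (μ := volume)
    rw [finrank_euclideanSpace_fin]; norm_num
  refine hint.mono' Ubub_cont.aestronglyMeasurable ?_
  filter_upwards with x
  have h1 : (0:ℝ) < 1 + ‖x‖ ^ 2 := by positivity
  have hb : ((1:ℝ) + ‖x‖ ^ 2) ^ (-(8:ℝ) / 2) ≤ (2:ℝ) ^ ((8:ℝ) / 2) * (1 + ‖x‖) ^ (-(8:ℝ)) :=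
    rpow_neg_one_add_norm_sq_le x (by norm_num)
  have he : ((1:ℝ) + ‖x‖ ^ 2) ^ (-(8:ℝ) / 2) = (((1:ℝ) + ‖x‖ ^ 2) ^ (4:ℕ))⁻¹ := by
    rw [show (-(8:ℝ)/2) = -(4:ℕ) by norm_num, Real.rpow_neg h1.le, Real.rpow_natCast]
  have he2 : ((2:ℝ) ^ ((8:ℝ)/2)) = (2:ℝ) ^ (4:ℝ) := by norm_num
  rw [Real.norm_eq_abs, Ubub_pow, abs_of_nonneg (by positivity)]
  calc c4 ^ 4 * ((1 + ‖x‖ ^ 2) ^ 4)⁻¹ ≤ c4 ^ 4 * ((2:ℝ) ^ (4:ℝ) * (1 + ‖x‖) ^ (-(8:ℝ))) := by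
        apply mul_le_mul_of_nonneg_left _ (by positivity)
        rw [← he2, ← he]; exact hb
    _ = _ := rfl

lemma Ubub_norm : ∫ x : E4, Ubub x ^ 4 = 1 := by
  have h : ∀ x : E4, Ubub x ^ 4 = (fun r : ℝ => c4 ^ 4 * ((1 + r ^ 2) ^ 4)⁻¹) ‖x‖ :=
    fun x => Ubub_pow x
  rw [integral_congr_ae (Filter.Eventually.of_forall h),
    radial (fun r : ℝ => c4 ^ 4 * ((1 + r ^ 2) ^ 4)⁻¹)]
  have h2 : ∫ r in Ioi (0:ℝ), r ^ 3 * (c4 ^ 4 * ((1 + r ^ 2) ^ 4)⁻¹) =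
      c4 ^ 4 * ∫ r in Ioi (0:ℝ), r ^ 3 * ((1 + r ^ 2) ^ 4)⁻¹ := by
    rw [← integral_const_mul]; congr 1; funext r; ring
  rw [h2, (oneD 0 le_rfl).2, c4_pow_four]
  have : π ≠ 0 := pi_ne_zero
  field_simp
  ring

lemma tail (R : ℝ) (hR : 0 < R) :
    ∫ x in (Metric.ball (0:E4) R)ᶜ, Ubub x ^ 4 ≤ 3 * (R ^ 4)⁻¹ := by
  have hind : ∀ x : E4, ((Metric.ball (0:E4) R)ᶜ).indicator (fun x => Ubub x ^ 4) x =
      (Ici R).indicator (fun r => c4 ^ 4 * ((1 + r ^ 2) ^ 4)⁻¹) ‖x‖ := by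
    intro x
    have hmem : x ∈ (Metric.ball (0:E4) R)ᶜ ↔ ‖x‖ ∈ Ici R := by
      simp [Metric.mem_ball, dist_zero_right, not_lt]
    by_cases h : x ∈ (Metric.ball (0:E4) R)ᶜ
    · rw [Set.indicator_of_mem h, Set.indicator_of_mem (hmem.mp h)]
      exact Ubub_pow x
    · rw [Set.indicator_of_notMem h, Set.indicator_of_notMem (fun hc => h (hmem.mpr hc))]
  rw [← integral_indicator measurableSet_ball.compl,
    integral_congr_ae (Filter.Eventually.of_forall hind),
    radial ((Ici R).indicator (fun r => c4 ^ 4 * ((1 + r ^ 2) ^ 4)⁻¹))]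
  have h2 : ∀ r : ℝ, r ^ 3 * (Ici R).indicator (fun r => c4 ^ 4 * ((1 + r ^ 2) ^ 4)⁻¹) r =
      (Ici R).indicator (fun r => c4 ^ 4 * (r ^ 3 * ((1 + r ^ 2) ^ 4)⁻¹)) r := by
    intro r; by_cases h : r ∈ Ici R <;> simp [h] <;> ring
  have hIR : Ioi (0:ℝ) ∩ Ici R = Ici R :=
    Set.inter_eq_self_of_subset_right (fun r hr => lt_of_lt_of_le hR hr)
  rw [integral_congr_ae (Filter.Eventually.of_forall fun r => h2 r),
    setIntegral_indicator measurableSet_Ici, hIR, integral_Ici_eq_integral_Ioi,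
    integral_const_mul, (oneD R hR.le).2]
  have hc : c4 ^ 4 = 6 / π ^ 2 := c4_pow_four
  have hu : (0:ℝ) < 1 + R ^ 2 := by positivity
  have key : (1/4) * ((1 + R ^ 2) ^ 2)⁻¹ - (1/6) * ((1 + R ^ 2) ^ 3)⁻¹ ≤ (1/4) * (R ^ 4)⁻¹ := by
    have h1 : ((1 + R ^ 2) ^ 2)⁻¹ ≤ (R ^ 4)⁻¹ := by
      apply inv_anti₀ (by positivity)
      calc R ^ 4 = (R ^ 2) ^ 2 := by ring
        _ ≤ (1 + R ^ 2) ^ 2 := by nlinarith [sq_nonneg R]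
    nlinarith [inv_pos.mpr (pow_pos hu 3), sq_nonneg R]
  calc 2 * π ^ 2 * (c4 ^ 4 * ((1/4) * ((1 + R ^ 2) ^ 2)⁻¹ - (1/6) * ((1 + R ^ 2) ^ 3)⁻¹))
      ≤ 2 * π ^ 2 * (c4 ^ 4 * ((1/4) * (R ^ 4)⁻¹)) := by
        apply mul_le_mul_of_nonneg_left _ (by positivity)
        exact mul_le_mul_of_nonneg_left key (by positivity)
    _ = 3 * (R ^ 4)⁻¹ := by
        rw [hc]; field_simp; ring

lemma key_change (ε : ℝ) (hε : 0 < ε) (x₀ : E4) (s : Set E4) (hs : MeasurableSet s) :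
    ∫ y in s, Ueps ε x₀ y ^ 4 =
      ∫ x in (fun x : E4 => ε • x + x₀) ⁻¹' s, Ubub x ^ 4 := by
  set F : E4 → ℝ := s.indicator (fun y => Ueps ε x₀ y ^ 4) with hF
  have hεne : ε ≠ 0 := hε.ne'
  have step1 : ∫ y in s, Ueps ε x₀ y ^ 4 = ∫ y, F y := (integral_indicator hs).symm
  have step2 : ∫ y, F y = ∫ x, F (x + x₀) := (integral_add_right_eq_self F x₀).symm
  have step3 : ∫ x, F (x + x₀) = ε ^ 4 * ∫ x, F (ε • x + x₀) := by
    have := MeasureTheory.Measure.integral_comp_smul (volume : Measure E4)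
      (fun x => F (x + x₀)) ε
    rw [finrank_euclideanSpace_fin] at this
    rw [show (fun x : E4 => F (ε • x + x₀)) = fun x : E4 => F (ε • x + x₀) from rfl]
    have h4 : ∫ x : E4, F (ε • x + x₀) = |(ε ^ 4)⁻¹| • ∫ x : E4, F (x + x₀) := this
    rw [h4, smul_eq_mul, abs_inv, abs_pow, abs_of_pos hε]
    field_simp
  have step4 : ∀ x : E4, F (ε • x + x₀) =
      ((fun x : E4 => ε • x + x₀) ⁻¹' s).indicator (fun x => (ε⁻¹) ^ 4 * Ubub x ^ 4) x := by
    intro x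
    have hU : Ueps ε x₀ (ε • x + x₀) ^ 4 = (ε⁻¹) ^ 4 * Ubub x ^ 4 := by
      rw [Ueps, add_sub_cancel_right, smul_smul, inv_mul_cancel₀ hεne, one_smul, mul_pow]
    by_cases h : ε • x + x₀ ∈ s
    · have hx : x ∈ (fun x : E4 => ε • x + x₀) ⁻¹' s := h
      rw [hF, Set.indicator_of_mem h, Set.indicator_of_mem hx, hU]
    · have hx : x ∉ (fun x : E4 => ε • x + x₀) ⁻¹' s := h
      rw [hF, Set.indicator_of_notMem h, Set.indicator_of_notMem hx]
  rw [step1, step2, step3, integral_congr_ae (Filter.Eventually.of_forall step4)]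
  have hmeas : MeasurableSet ((fun x : E4 => ε • x + x₀) ⁻¹' s) :=
    hs.preimage (by fun_prop)
  rw [integral_indicator hmeas]
  rw [show (fun x : E4 => (ε⁻¹) ^ 4 * Ubub x ^ 4) = fun x : E4 => (ε⁻¹) ^ 4 * Ubub x ^ 4 from rfl]
  rw [integral_const_mul]
  field_simp

/-- There is `C > 0` such that for every `δ > 0`, `ε > 0` and `t ∈ [0, δ/2]`,
`0 ≤ 1 - ∫_{B_δ} U_{ε,te₁}⁴ ≤ C ε⁴/δ⁴`. -/
theorem stmt11 :
    ∃ C : ℝ, 0 < C ∧ ∀ δ : ℝ, 0 < δ → ∀ ε : ℝ, 0 < ε → ∀ t ∈ Set.Icc (0 : ℝ) (δ / 2),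
      0 ≤ 1 - (∫ y in Metric.ball (0 : E4) δ, Ueps ε (t • e1) y ^ 4) ∧
      1 - (∫ y in Metric.ball (0 : E4) δ, Ueps ε (t • e1) y ^ 4) ≤ C * ε ^ 4 / δ ^ 4 := by
  refine ⟨48, by norm_num, fun δ hδ ε hε t ht => ?_⟩
  obtain ⟨ht0, ht2⟩ := ht
  set x₀ : E4 := t • e1 with hx₀
  have hx₀norm : ‖x₀‖ = t := by
    rw [hx₀, norm_smul, Real.norm_eq_abs, abs_of_nonneg ht0, e1, EuclideanSpace.norm_single,
      norm_one, mul_one]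
  set s' : Set E4 := (fun x : E4 => ε • x + x₀) ⁻¹' (Metric.ball (0:E4) δ) with hs'
  have hmeas : MeasurableSet s' := measurableSet_ball.preimage (by fun_prop)
  have hkey : ∫ y in Metric.ball (0:E4) δ, Ueps ε x₀ y ^ 4 = ∫ x in s', Ubub x ^ 4 :=
    key_change ε hε x₀ _ measurableSet_ball
  have hsplit : (∫ x in s', Ubub x ^ 4) + (∫ x in s'ᶜ, Ubub x ^ 4) = 1 := by
    rw [integral_add_compl hmeas Ubub_integrable, Ubub_norm]
  have hrest : 1 - (∫ y in Metric.ball (0:E4) δ, Ueps ε x₀ y ^ 4) = ∫ x in s'ᶜ, Ubub x ^ 4 := by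
    rw [hkey]; linarith
  set R : ℝ := δ / (2 * ε) with hR
  have hRpos : 0 < R := by positivity
  have hsub : s'ᶜ ⊆ (Metric.ball (0:E4) R)ᶜ := by
    intro x hx
    simp only [hs', Set.mem_compl_iff, Set.mem_preimage, Metric.mem_ball, dist_zero_right,
      not_lt] at hx ⊢
    have h1 : ‖ε • x + x₀‖ ≤ ε * ‖x‖ + t := by
      calc ‖ε • x + x₀‖ ≤ ‖ε • x‖ + ‖x₀‖ := norm_add_le _ _
        _ = ε * ‖x‖ + t := by rw [norm_smul, Real.norm_eq_abs, abs_of_pos hε, hx₀norm]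
    have h2 : δ / 2 ≤ ε * ‖x‖ := by linarith
    rw [hR, div_le_iff₀ (by positivity)]
    linarith [mul_comm ε ‖x‖]
  have hbound : (∫ x in s'ᶜ, Ubub x ^ 4) ≤ ∫ x in (Metric.ball (0:E4) R)ᶜ, Ubub x ^ 4 := by
    apply setIntegral_mono_set Ubub_integrable.integrableOn
    · filter_upwards with x using by positivity
    · exact HasSubset.Subset.eventuallyLE hsub
  have htail : (∫ x in (Metric.ball (0:E4) R)ᶜ, Ubub x ^ 4) ≤ 3 * (R ^ 4)⁻¹ := tail R hRpos
  have hfinal : 3 * (R ^ 4)⁻¹ = 48 * ε ^ 4 / δ ^ 4 := by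
    rw [hR]; field_simp; ring
  constructor
  · rw [hrest]
    exact setIntegral_nonneg hmeas.compl (fun x _ => by positivity)
  · rw [hrest]
    calc (∫ x in s'ᶜ, Ubub x ^ 4) ≤ 3 * (R ^ 4)⁻¹ := le_trans hbound htail
      _ = 48 * ε ^ 4 / δ ^ 4 := hfinal
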